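/- Let M ≥ 1 be an integer, let λ* > 1 satisfy T_M(λ*) = 3, let x_j = cos((2j+1)π/(2M)) and ω_j = (λ*+1)/(2(λ*-x_j)) for j = 0, …, M-1 be the SRJ relaxation factors. Let B ∈ ℝ^{n×n} be a symmetric matrix all of whose eigenvalues lie in the half-open interval [-1, 1). Then every eigenvalue of the SRJ iteration matrix B_SRJ = ∏_{j=0}^{M-1} [(1-ω_j)I + ω_j B] has absolute value strictly less than 1; i.e. the spectral radius of B_SRJ is strictly less than 1, so one SRJ cycle is a convergent iteration whenever the underlying Jacobi-type iteration matrix B has spectrum in [-1,1). -/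

import Mathlib

section SRJAux
open Polynomial Polynomial.Chebyshev Real

lemma chebT_aux : ∀ m : ℕ, (T ℝ (m : ℤ)).natDegree ≤ m ∧ (T ℝ (m : ℤ)).coeff m = 2 ^ (m - 1) := by
  intro m
  induction m using Nat.strong_induction_on with
  | _ m ih =>
    match m with
    | 0 => simp
    | 1 => simp
    | (k+2) =>
      have h1 := ih (k+1) (by omega)
      have h0 := ih k (by omega)
      have hrec : T ℝ ((k+2 : ℕ) : ℤ) = 2 * X * T ℝ ((k+1 : ℕ) : ℤ) - T ℝ (k : ℤ) := by
        push_cast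
        exact T_add_two ℝ k
      constructor
      · rw [hrec]
        refine (natDegree_sub_le _ _).trans ?_
        have : (2 * X * T ℝ ((k+1:ℕ) : ℤ)).natDegree ≤ k + 2 := by
          refine (natDegree_mul_le).trans ?_
          have : (2 * X : ℝ[X]).natDegree ≤ 1 := by
            refine (natDegree_mul_le).trans ?_
            simp
          omega
        have := h0.1
        omega
      · rw [hrec]
        have hz : (T ℝ (k : ℤ)).coeff (k+2) = 0 :=
          coeff_eq_zero_of_natDegree_lt (by omega)
        have hX : (2 * X * T ℝ ((k+1:ℕ) : ℤ)).coeff (k+2)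
            = 2 * (T ℝ ((k+1:ℕ) : ℤ)).coeff (k+1) := by
          have h2 : (2:ℝ[X]) = C 2 := by rw [map_ofNat]
          rw [mul_assoc, h2, coeff_C_mul, coeff_X_mul]
        rw [coeff_sub, hz, hX, h1.2]
        have e1 : k + 1 - 1 = k := by omega
        have e2 : k + 2 - 1 = k + 1 := by omega
        rw [e1, e2, pow_succ]
        ring

lemma cheb_factor (M : ℕ) (hM : 1 ≤ M) (x : Fin M → ℝ)
    (hx : ∀ j : Fin M, x j = Real.cos ((2 * (j : ℕ) + 1) * Real.pi / (2 * M))) :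
    T ℝ (M : ℤ) = C ((2:ℝ) ^ (M - 1)) * ∏ j : Fin M, (X - C (x j)) := by
  have hMR : (0:ℝ) < M := by positivity
  have hpi := Real.pi_pos
  -- angles
  set θ : Fin M → ℝ := fun j => (2 * (j : ℕ) + 1) * Real.pi / (2 * M) with hθ
  have hθmem : ∀ j, θ j ∈ Set.Icc 0 Real.pi := by
    intro j
    constructor
    · positivity
    · rw [div_le_iff₀ (by positivity)]
      have : (2 * (j:ℕ) + 1 : ℝ) ≤ 2 * M := by
        have : (j : ℕ) < M := j.2
        have : ((j:ℕ) : ℝ) ≤ (M : ℝ) - 1 := by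
          have : ((j:ℕ) : ℝ) + 1 ≤ M := by exact_mod_cast this
          linarith
        linarith
      nlinarith
  -- injectivity of x
  have hinj : Function.Injective x := by
    intro j k hjk
    rw [hx j, hx k] at hjk
    have := Real.injOn_cos (hθmem j) (hθmem k) hjk
    have h2 : (2 * (j:ℕ) + 1 : ℝ) = 2 * (k:ℕ) + 1 := by
      have hc : Real.pi / (2 * (M:ℝ)) ≠ 0 := by positivity
      rw [hθ] at this
      simp only [mul_div_assoc] at this
      exact mul_right_cancel₀ hc this
    have : ((j:ℕ) : ℝ) = (k:ℕ) := by linarith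
    exact Fin.ext (by exact_mod_cast this)
  -- T vanishes at each x j
  have hroot : ∀ j, (T ℝ (M:ℤ)).eval (x j) = 0 := by
    intro j
    rw [hx j, Polynomial.Chebyshev.T_real_cos]
    have : ((M:ℤ) : ℝ) * ((2 * (j:ℕ) + 1) * Real.pi / (2 * M)) = (2 * (j:ℕ) + 1) * Real.pi / 2 := by
      push_cast
      field_simp
    rw [this]
    rw [Real.cos_eq_zero_iff]
    exact ⟨(j:ℕ), by push_cast; ring⟩
  -- the difference polynomial
  set P : ℝ[X] := ∏ j : Fin M, (X - C (x j)) with hP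
  have hPmonic : P.Monic := monic_prod_of_monic _ _ fun j _ => monic_X_sub_C _
  have hPdeg : P.natDegree = M := by
    rw [hP, natDegree_prod _ _ fun j _ => X_sub_C_ne_zero _]
    simp
  set Q : ℝ[X] := T ℝ (M:ℤ) - C ((2:ℝ)^(M-1)) * P with hQ
  have hQdeg : Q.natDegree ≤ M := by
    refine (natDegree_sub_le _ _).trans ?_
    have h1 : (T ℝ (M:ℤ)).natDegree ≤ M := (chebT_aux M).1
    have h2 : (C ((2:ℝ)^(M-1)) * P).natDegree ≤ M := by
      refine natDegree_mul_le.trans ?_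
      simp [hPdeg]
    omega
  have hQcoeff : Q.coeff M = 0 := by
    rw [hQ, coeff_sub, (chebT_aux M).2, coeff_C_mul, ← hPdeg, hPmonic.coeff_natDegree]
    ring
  have hQroot : ∀ j, Q.eval (x j) = 0 := by
    intro j
    rw [hQ, eval_sub, eval_mul, eval_C, hroot j, hP, eval_prod]
    rw [Finset.prod_eq_zero (Finset.mem_univ j) (by simp)]
    ring
  have hQ0 : Q = 0 := by
    by_contra hne
    have hlt : Q.natDegree < M := by
      rcases lt_or_eq_of_le hQdeg with h | h
      · exact h
      · exfalso
        have hlc : Q.leadingCoeff = 0 := by rw [leadingCoeff, h]; exact hQcoeff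
        exact hne (leadingCoeff_eq_zero.mp hlc)
    exact hne (Polynomial.eq_zero_of_natDegree_lt_card_of_eval_eq_zero Q hinj hQroot
      (by simpa using hlt))
  exact sub_eq_zero.mp hQ0

lemma srj_scalar (M : ℕ) (hM : 1 ≤ M) (lamstar : ℝ) (hlam : 1 < lamstar)
    (hT : (T ℝ (M : ℤ)).eval lamstar = 3)
    (x ω : Fin M → ℝ)
    (hx : ∀ j : Fin M, x j = Real.cos ((2 * (j : ℕ) + 1) * Real.pi / (2 * M)))
    (hω : ∀ j, ω j = (lamstar + 1) / (2 * (lamstar - x j)))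
    (ν : ℝ) (hν : ν ∈ Set.Ico (-1:ℝ) 1) :
    |∏ j : Fin M, ((1 - ω j) + ω j * ν)| < 1 := by
  obtain ⟨hν1, hν2⟩ := hν
  have hxval : ∀ j, -1 ≤ x j ∧ x j ≤ 1 := by
    intro j; rw [hx j]; exact ⟨Real.neg_one_le_cos _, Real.cos_le_one _⟩
  have hgt : ∀ j, 0 < lamstar - x j := fun j => by linarith [(hxval j).2]
  set fν : ℝ := ((lamstar + 1) * ν + (lamstar - 1)) / 2 with hfν
  have hfge : -1 ≤ fν := by rw [hfν]; nlinarith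
  have hflt : fν < lamstar := by rw [hfν]; nlinarith
  have hfactor : ∀ j, (1 - ω j) + ω j * ν = (fν - x j) / (lamstar - x j) := by
    intro j
    have hne : lamstar - x j ≠ 0 := (hgt j).ne'
    rw [hω j, hfν]
    field_simp
    ring
  have heval : ∀ t : ℝ, (T ℝ (M:ℤ)).eval t = 2^(M-1) * ∏ j : Fin M, (t - x j) := by
    intro t
    rw [cheb_factor M hM x hx]
    simp [eval_prod]
  have h2pos : (0:ℝ) < 2^(M-1) := by positivity
  have hPlam : ∏ j : Fin M, (lamstar - x j) = 3 / 2^(M-1) := by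
    have := heval lamstar
    rw [hT] at this
    field_simp
    linarith
  have hprodpos : (0:ℝ) < ∏ j : Fin M, (lamstar - x j) :=
    Finset.prod_pos fun j _ => hgt j
  have hprod : ∏ j : Fin M, ((1 - ω j) + ω j * ν)
      = (T ℝ (M:ℤ)).eval fν / 3 := by
    calc ∏ j : Fin M, ((1 - ω j) + ω j * ν)
        = ∏ j : Fin M, ((fν - x j) / (lamstar - x j)) := by
          exact Finset.prod_congr rfl fun j _ => hfactor j
      _ = (∏ j : Fin M, (fν - x j)) / (∏ j : Fin M, (lamstar - x j)) :=
          Finset.prod_div_distrib _ _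
      _ = (T ℝ (M:ℤ)).eval fν / 3 := by
          rw [hPlam, heval fν]
          field_simp
  rw [hprod]
  have hbound : |(T ℝ (M:ℤ)).eval fν| < 3 := by
    rcases le_or_gt fν 1 with hf1 | hf1
    · have : fν = Real.cos (Real.arccos fν) := (Real.cos_arccos hfge hf1).symm
      rw [this, Polynomial.Chebyshev.T_real_cos]
      calc |Real.cos ((M:ℤ) * Real.arccos fν)| ≤ 1 := Real.abs_cos_le_one _
        _ < 3 := by norm_num
    · have hpos : ∀ j ∈ Finset.univ, 0 < fν - x j := fun j _ => by linarith [(hxval j).2]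
      have hlt : ∀ j ∈ Finset.univ, fν - x j < lamstar - x j := fun j _ => by linarith
      have : Nonempty (Fin M) := ⟨⟨0, hM⟩⟩
      have hplt : ∏ j : Fin M, (fν - x j) < ∏ j : Fin M, (lamstar - x j) :=
        Finset.prod_lt_prod_of_nonempty hpos hlt Finset.univ_nonempty
      have hppos : (0:ℝ) < ∏ j : Fin M, (fν - x j) := Finset.prod_pos hpos
      rw [heval fν]
      rw [abs_of_pos (by positivity)]
      calc 2^(M-1) * ∏ j : Fin M, (fν - x j)
          < 2^(M-1) * ∏ j : Fin M, (lamstar - x j) := by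
            exact (mul_lt_mul_iff_right₀ h2pos).mpr hplt
        _ = 3 := by rw [hPlam]; field_simp
  rw [abs_div]
  rw [abs_of_pos (by norm_num : (0:ℝ) < 3)]
  linarith [abs_nonneg ((T ℝ (M:ℤ)).eval fν)]

end SRJAux

open Polynomial.Chebyshev in
/-- For a symmetric real matrix `B` with spectrum in `[-1, 1)`, every eigenvalue of the
SRJ iteration matrix `B_SRJ = ∏ j [(1-ω_j)I + ω_j B]` (with the Chebyshev-derived SRJ
relaxation factors) has absolute value strictly less than 1. -/
theorem stmt16 {n : ℕ} (M : ℕ) (hM : 1 ≤ M) (lamstar : ℝ) (hlam : 1 < lamstar)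
    (hT : (Polynomial.Chebyshev.T ℝ (M : ℤ)).eval lamstar = 3)
    (x ω : Fin M → ℝ)
    (hx : ∀ j : Fin M, x j = Real.cos ((2 * (j : ℕ) + 1) * Real.pi / (2 * M)))
    (hω : ∀ j, ω j = (lamstar + 1) / (2 * (lamstar - x j)))
    (B : Matrix (Fin n) (Fin n) ℝ) (hB : B.IsSymm)
    (hspec : ∀ μ ∈ spectrum ℝ B, μ ∈ Set.Ico (-1 : ℝ) 1)
    (BSRJ : Matrix (Fin n) (Fin n) ℝ)
    (hBSRJ : BSRJ = (List.ofFn fun j : Fin M =>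
        (1 - ω j) • (1 : Matrix (Fin n) (Fin n) ℝ) + ω j • B).prod) :
    ∀ μ ∈ spectrum ℝ BSRJ, |μ| < 1 := by
  have hH : B.IsHermitian := by
    rw [Matrix.IsHermitian, Matrix.conjTranspose]
    exact Matrix.isHermitian_iff_isSymm.mpr hB
  set U := hH.eigenvectorUnitary with hU
  set ev := hH.eigenvalues with hev
  have hspectral : B = (U : Matrix (Fin n) (Fin n) ℝ) * Matrix.diagonal ev * star (U : Matrix (Fin n) (Fin n) ℝ) := by
    have := hH.spectral_theorem
    simpa using this
  have hUU : (U : Matrix (Fin n) (Fin n) ℝ) * star (U : Matrix (Fin n) (Fin n) ℝ) = 1 :=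
    Unitary.coe_mul_star_self U
  have hUU' : star (U : Matrix (Fin n) (Fin n) ℝ) * (U : Matrix (Fin n) (Fin n) ℝ) = 1 :=
    Unitary.coe_star_mul_self U
  set d : Fin M → Fin n → ℝ := fun j i => (1 - ω j) + ω j * ev i with hd
  -- each factor is a conjugated diagonal
  have hfac : ∀ j : Fin M, (1 - ω j) • (1 : Matrix (Fin n) (Fin n) ℝ) + ω j • B
      = (U : Matrix (Fin n) (Fin n) ℝ) * Matrix.diagonal (d j) * star (U : Matrix (Fin n) (Fin n) ℝ) := by
    intro j
    have hdiag : Matrix.diagonal (d j)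
        = (1 - ω j) • (1 : Matrix (Fin n) (Fin n) ℝ) + ω j • Matrix.diagonal ev := by
      ext i k
      rcases eq_or_ne i k with rfl | hik
      · simp [hd, Matrix.add_apply, Matrix.smul_apply, Matrix.diagonal_apply_eq,
          Matrix.one_apply_eq, smul_eq_mul]
      · simp [Matrix.add_apply, Matrix.smul_apply, Matrix.diagonal_apply_ne _ hik,
          Matrix.one_apply_ne hik]
    rw [hdiag, mul_add, add_mul, mul_smul_comm, mul_smul_comm, smul_mul_assoc,
      smul_mul_assoc, mul_one, hUU, ← hspectral]
  -- conjugation of a list product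
  have hconj : ∀ l : List (Matrix (Fin n) (Fin n) ℝ),
      (l.map fun A => (U : Matrix (Fin n) (Fin n) ℝ) * A * star (U : Matrix (Fin n) (Fin n) ℝ)).prod
      = (U : Matrix (Fin n) (Fin n) ℝ) * l.prod * star (U : Matrix (Fin n) (Fin n) ℝ) := by
    intro l
    induction l with
    | nil => simp [hUU]
    | cons a t ih =>
      simp only [List.map_cons, List.prod_cons, ih]
      rw [show (U : Matrix (Fin n) (Fin n) ℝ) * a * star (U : Matrix (Fin n) (Fin n) ℝ) *
          ((U : Matrix (Fin n) (Fin n) ℝ) * t.prod * star (U : Matrix (Fin n) (Fin n) ℝ))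
          = (U : Matrix (Fin n) (Fin n) ℝ) * a * (star (U : Matrix (Fin n) (Fin n) ℝ) *
          (U : Matrix (Fin n) (Fin n) ℝ)) * t.prod * star (U : Matrix (Fin n) (Fin n) ℝ) by
          noncomm_ring]
      rw [hUU']
      noncomm_ring
  -- diagonal product
  have hdiagprod : (List.ofFn fun j : Fin M => Matrix.diagonal (d j)).prod
      = Matrix.diagonal (fun i => ∏ j : Fin M, d j i) := by
    have : (List.ofFn fun j : Fin M => Matrix.diagonal (d j))
        = (List.ofFn d).map (Matrix.diagonalRingHom (Fin n) ℝ) := by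
      rw [List.map_ofFn]; rfl
    rw [this, ← map_list_prod (Matrix.diagonalRingHom (Fin n) ℝ)]
    have pointwise : ∀ (l : List (Fin n → ℝ)) (i : Fin n), l.prod i = (l.map (fun g => g i)).prod := by
      intro l i
      induction l with
      | nil => rfl
      | cons a t ih => simp [List.prod_cons, Pi.mul_apply, ih]
    have hpw : (List.ofFn d).prod = fun i => ∏ j : Fin M, d j i := by
      funext i
      rw [pointwise, List.map_ofFn, ← List.prod_ofFn (f := fun j => d j i)]
      rfl
    rw [hpw]
    rfl
  have hBSRJ2 : BSRJ = (U : Matrix (Fin n) (Fin n) ℝ) *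
      Matrix.diagonal (fun i => ∏ j : Fin M, d j i) * star (U : Matrix (Fin n) (Fin n) ℝ) := by
    rw [hBSRJ]
    have : (List.ofFn fun j : Fin M =>
        (1 - ω j) • (1 : Matrix (Fin n) (Fin n) ℝ) + ω j • B)
        = (List.ofFn fun j : Fin M => Matrix.diagonal (d j)).map
          (fun A => (U : Matrix (Fin n) (Fin n) ℝ) * A * star (U : Matrix (Fin n) (Fin n) ℝ)) := by
      rw [List.map_ofFn]
      exact congrArg List.ofFn (funext fun j => hfac j)
    rw [this, hconj, hdiagprod]
  intro μ hμ
  rw [hBSRJ2] at hμ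
  rw [Unitary.spectrum_star_right_conjugate] at hμ
  rw [spectrum_diagonal] at hμ
  obtain ⟨i, hi⟩ := hμ
  have hevi : ev i ∈ Set.Ico (-1:ℝ) 1 := hspec _ (hH.eigenvalues_mem_spectrum_real i)
  have := srj_scalar M hM lamstar hlam hT x ω hx hω (ev i) hevi
  rw [← hi]
  simpa [hd] using this
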